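/- Let G be a finite group with subgroups U, L, V such that L normalizes both U and V. Let M be a finite-dimensional complex representation of G, and let e_U, e_V ∈ End(M) denote the averaging projections onto the U-fixed and V-fixed vectors respectively. Then there exists an invertible linear operator z ∈ GL(M), commuting with the action of L and with e_U and e_V, such that z⁻¹ e_U e_V is an idempotent in End(M). -/

import Mathlib

open Finset

section aux

variable {G : Type} [Group G] {M : Type} [AddCommGroup M] [Module ℂ M]
  (ρ : Representation ℂ G M) (H : Subgroup G) [Fintype H]

lemma aux_mul_sum (h : H) :
    ρ (h : G) * (∑ k : H, ρ (k : G)) = ∑ k : H, ρ (k : G) := by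
  rw [Finset.mul_sum]
  exact Fintype.sum_equiv (Equiv.mulLeft h) _ _ (fun k => by simp [map_mul])

lemma aux_sum_sq :
    (∑ k : H, ρ (k : G)) * (∑ k : H, ρ (k : G)) = (Nat.card H : ℂ) • ∑ k : H, ρ (k : G) := by
  rw [Finset.sum_mul]
  simp_rw [aux_mul_sum ρ H]
  rw [Finset.sum_const, Finset.card_univ, Nat.card_eq_fintype_card,
    Nat.cast_smul_eq_nsmul]

lemma aux_conj (l : G) (h1 : ∀ u ∈ H, l * u * l⁻¹ ∈ H) (h2 : ∀ u ∈ H, l⁻¹ * u * l ∈ H) :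
    ρ l * (∑ k : H, ρ (k : G)) = (∑ k : H, ρ (k : G)) * ρ l := by
  rw [Finset.mul_sum, Finset.sum_mul]
  refine Fintype.sum_equiv
    ⟨fun k => ⟨l * k * l⁻¹, h1 k k.2⟩, fun k => ⟨l⁻¹ * k * l, h2 k k.2⟩,
      fun k => ?_, fun k => ?_⟩ _ _ (fun k => ?_)
  · ext; simp only []; group
  · ext; simp only []; group
  · show ρ l * ρ (k : G) = ρ (l * (k : G) * l⁻¹) * ρ l
    rw [← map_mul, ← map_mul]
    congr 1
    group

end aux

/-- **Proposition (z-operator).** Let `G` be a finite group with subgroups `U`, `L`, `V`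
such that `L` normalizes `U` and `V`. Let `M` be a finite-dimensional complex
representation of `G`, and let `eU`, `eV` be the averaging projections onto the
`U`-fixed and `V`-fixed vectors. Then there is an invertible operator `z` on `M`,
commuting with the `L`-action and with `eU` and `eV`, such that `z⁻¹ * eU * eV`
is an idempotent endomorphism of `M`. -/
theorem exists_z_operator
    (G : Type) [Group G] [Finite G] (U L V : Subgroup G)
    (hLU : ∀ l ∈ L, ∀ u ∈ U, l * u * l⁻¹ ∈ U)
    (hLV : ∀ l ∈ L, ∀ v ∈ V, l * v * l⁻¹ ∈ V)
    (M : Type) [AddCommGroup M] [Module ℂ M] [FiniteDimensional ℂ M]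
    (ρ : Representation ℂ G M)
    (eU eV : Module.End ℂ M)
    (heU : eU = (Nat.card U : ℂ)⁻¹ • ∑ᶠ u : U, ρ (u : G))
    (heV : eV = (Nat.card V : ℂ)⁻¹ • ∑ᶠ v : V, ρ (v : G)) :
    ∃ z : (Module.End ℂ M)ˣ,
      (∀ l ∈ L, Commute (z : Module.End ℂ M) (ρ l)) ∧
      Commute (z : Module.End ℂ M) eU ∧
      Commute (z : Module.End ℂ M) eV ∧
      IsIdempotentElem ((↑z⁻¹ : Module.End ℂ M) * eU * eV) := by
  classical
  letI : Fintype G := Fintype.ofFinite G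
  letI : Fintype U := Fintype.ofFinite U
  letI : Fintype V := Fintype.ofFinite V
  rw [finsum_eq_sum_of_fintype] at heU heV
  have cardU : (Nat.card U : ℂ) ≠ 0 := Nat.cast_ne_zero.mpr Nat.card_pos.ne'
  have cardV : (Nat.card V : ℂ) ≠ 0 := Nat.cast_ne_zero.mpr Nat.card_pos.ne'
  -- idempotency
  have idem : ∀ (c : ℂ) (S : Module.End ℂ M), S * S = c • S → c ≠ 0 →
      (c⁻¹ • S) * (c⁻¹ • S) = c⁻¹ • S := by
    intro c S h hc
    rw [smul_mul_assoc, mul_smul_comm, h, smul_smul, smul_smul]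
    congr 1
    field_simp
  have hPP : eU * eU = eU := by rw [heU]; exact idem _ _ (aux_sum_sq ρ U) cardU
  have hQQ : eV * eV = eV := by rw [heV]; exact idem _ _ (aux_sum_sq ρ V) cardV
  -- commutation with L
  have hUcomm : ∀ l ∈ L, ρ l * eU = eU * ρ l := by
    intro l hl
    rw [heU, mul_smul_comm, smul_mul_assoc,
      aux_conj ρ U l (fun u hu => hLU l hl u hu)
        (fun u hu => by simpa using hLU l⁻¹ (inv_mem hl) u hu)]
  have hVcomm : ∀ l ∈ L, ρ l * eV = eV * ρ l := by
    intro l hl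
    rw [heV, mul_smul_comm, smul_mul_assoc,
      aux_conj ρ V l (fun u hu => hLV l hl u hu)
        (fun u hu => by simpa using hLV l⁻¹ (inv_mem hl) u hu)]
  -- the operator T and z₀
  set T : Module.End ℂ M := eU + eV - 1 with hT
  set z₀ : Module.End ℂ M := T * T with hz₀
  have hTU : T * eU = eV * eU := by
    rw [hT]; simp only [sub_mul, add_mul, one_mul, hPP]; abel
  have hUT : eU * T = eU * eV := by
    rw [hT]; simp only [mul_sub, mul_add, mul_one, hPP]; abel
  have hTV : T * eV = eU * eV := by
    rw [hT]; simp only [sub_mul, add_mul, one_mul, hQQ]; abel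
  have hVT : eV * T = eV * eU := by
    rw [hT]; simp only [mul_sub, mul_add, mul_one, hQQ]; abel
  have hz₀U' : z₀ * eU = eU * (eV * eU) := by
    rw [hz₀, mul_assoc, hTU, hT]
    simp only [sub_mul, add_mul, one_mul, ← mul_assoc, hQQ]
    abel
  have hz₀U'' : eU * z₀ = eU * (eV * eU) := by
    rw [hz₀, ← mul_assoc, hUT, hT]
    simp only [mul_sub, mul_add, mul_one, mul_assoc, hQQ]
    abel
  have hz₀U : eU * z₀ = z₀ * eU := hz₀U''.trans hz₀U'.symm
  have hz₀V' : z₀ * eV = eV * (eU * eV) := by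
    rw [hz₀, mul_assoc, hTV, hT]
    simp only [sub_mul, add_mul, one_mul, ← mul_assoc, hPP]
    abel
  have hz₀V'' : eV * z₀ = eV * (eU * eV) := by
    rw [hz₀, ← mul_assoc, hVT, hT]
    simp only [mul_sub, mul_add, mul_one, mul_assoc, hPP]
    abel
  have hz₀V : eV * z₀ = z₀ * eV := hz₀V''.trans hz₀V'.symm
  have hzPQ : z₀ * (eU * eV) = (eU * eV) * (eU * eV) := by
    calc z₀ * (eU * eV) = (z₀ * eU) * eV := (mul_assoc z₀ eU eV).symm
      _ = (eU * (eV * eU)) * eV := by rw [hz₀U']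
      _ = (eU * eV) * (eU * eV) := by simp only [mul_assoc]
  have hz₀L : ∀ l ∈ L, ρ l * z₀ = z₀ * ρ l := by
    intro l hl
    have hTl : ρ l * T = T * ρ l := by
      rw [hT]
      simp only [mul_sub, sub_mul, mul_add, add_mul, mul_one, one_mul, hUcomm l hl,
        hVcomm l hl]
    rw [hz₀, ← mul_assoc, hTl, mul_assoc, hTl, mul_assoc]
  -- invariant inner product
  set n := Module.finrank ℂ M with hn
  set e : M ≃ₗ[ℂ] EuclideanSpace ℂ (Fin n) :=
    (Module.finBasis ℂ M).equivFun.trans (WithLp.linearEquiv 2 ℂ (Fin n → ℂ)).symm with he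
  set Φ : M → M → ℂ := fun x y => ∑ g : G, inner ℂ (e (ρ g x)) (e (ρ g y)) with hΦ
  have rho_mul : ∀ (g k : G) (w : M), ρ g (ρ k w) = ρ (g * k) w := by
    intro g k w; rw [map_mul]; rfl
  have Φsym_rho : ∀ (h : G) (x y : M), Φ x (ρ h y) = Φ (ρ h⁻¹ x) y := by
    intro h x y
    simp only [hΦ, rho_mul]
    refine Fintype.sum_equiv (Equiv.mulRight h)
      (fun g => (inner ℂ (e (ρ g x)) (e (ρ (g * h) y)) : ℂ))
      (fun g => (inner ℂ (e (ρ (g * h⁻¹) x)) (e (ρ g y)) : ℂ)) (fun g => ?_)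
    simp only [Equiv.coe_mulRight, mul_inv_cancel_right]
  have Φsum_left : ∀ {ι : Type} (s : Finset ι) (f : ι → M) (y : M),
      Φ (∑ i ∈ s, f i) y = ∑ i ∈ s, Φ (f i) y := by
    intro ι s f y
    simp only [hΦ, map_sum, sum_inner]
    exact Finset.sum_comm
  have Φsum_right : ∀ {ι : Type} (s : Finset ι) (f : ι → M) (x : M),
      Φ x (∑ i ∈ s, f i) = ∑ i ∈ s, Φ x (f i) := by
    intro ι s f x
    simp only [hΦ, map_sum, inner_sum]
    exact Finset.sum_comm
  have Φsmul_left : ∀ (c : ℂ) (x y : M), Φ (c • x) y = (starRingEnd ℂ) c * Φ x y := by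
    intro c x y; simp only [hΦ, map_smul, inner_smul_left, Finset.mul_sum]
  have Φsmul_right : ∀ (c : ℂ) (x y : M), Φ x (c • y) = c * Φ x y := by
    intro c x y; simp only [hΦ, map_smul, inner_smul_right, Finset.mul_sum]
  have Φadd_left : ∀ x y w : M, Φ (x + y) w = Φ x w + Φ y w := by
    intro x y w; simp only [hΦ, map_add, inner_add_left, Finset.sum_add_distrib]
  have Φadd_right : ∀ x y w : M, Φ x (y + w) = Φ x y + Φ x w := by
    intro x y w; simp only [hΦ, map_add, inner_add_right, Finset.sum_add_distrib]
  have Φsub_left : ∀ x y w : M, Φ (x - y) w = Φ x w - Φ y w := by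
    intro x y w; simp only [hΦ, map_sub, inner_sub_left, Finset.sum_sub_distrib]
  have Φsub_right : ∀ x y w : M, Φ x (y - w) = Φ x y - Φ x w := by
    intro x y w; simp only [hΦ, map_sub, inner_sub_right, Finset.sum_sub_distrib]
  have Φavg : ∀ (K : Subgroup G) (instK : Fintype K) (x y : M),
      Φ ((∑ k : K, ρ (k : G)) x) y = Φ x ((∑ k : K, ρ (k : G)) y) := by
    intro K instK x y
    rw [LinearMap.sum_apply, LinearMap.sum_apply, Φsum_left, Φsum_right]
    simp_rw [Φsym_rho]
    exact Fintype.sum_equiv (Equiv.inv K) _ _ (fun k => by simp)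
  have ΦU : ∀ x y : M, Φ (eU x) y = Φ x (eU y) := by
    intro x y
    rw [heU]
    simp only [LinearMap.smul_apply]
    rw [Φsmul_left, Φsmul_right, Φavg U _ x y]
    congr 1
    rw [map_inv₀, map_natCast]
  have ΦV : ∀ x y : M, Φ (eV x) y = Φ x (eV y) := by
    intro x y
    rw [heV]
    simp only [LinearMap.smul_apply]
    rw [Φsmul_left, Φsmul_right, Φavg V _ x y]
    congr 1
    rw [map_inv₀, map_natCast]
  have ΦT : ∀ x y : M, Φ (T x) y = Φ x (T y) := by
    intro x y
    have hTapp : ∀ w : M, T w = eU w + eV w - w := by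
      intro w
      rw [hT]
      simp [LinearMap.sub_apply, LinearMap.add_apply]
    rw [hTapp, hTapp, Φsub_left, Φadd_left, Φsub_right, Φadd_right, ΦU, ΦV]
  have Φdef : ∀ x : M, Φ x x = 0 → x = 0 := by
    intro x hx
    have hcast : Φ x x = ((∑ g : G, ‖e (ρ g x)‖ ^ 2 : ℝ) : ℂ) := by
      simp only [hΦ, inner_self_eq_norm_sq_to_K]
      push_cast
      rfl
    rw [hx] at hcast
    have h2 : (∑ g : G, ‖e (ρ g x)‖ ^ 2) = 0 := by exact_mod_cast hcast.symm
    have h3 := (Finset.sum_eq_zero_iff_of_nonneg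
      (fun g _ => sq_nonneg ‖e (ρ g x)‖)).mp h2 1 (Finset.mem_univ 1)
    have h4 : e (ρ 1 x) = 0 :=
      norm_eq_zero.mp (pow_eq_zero_iff (n := 2) (by norm_num) |>.mp h3)
    have h5 := e.map_eq_zero_iff.mp h4
    simpa using h5
  have L1 : ∀ v : M, T (T v) = 0 → T v = 0 := by
    intro v hv
    apply Φdef
    rw [ΦT, hv]
    simp [hΦ]
  -- kernel and range of z₀
  set K : Submodule ℂ M := LinearMap.ker z₀ with hK
  set R : Submodule ℂ M := LinearMap.range z₀ with hR
  have hKerT : ∀ v : M, z₀ v = 0 → T v = 0 := by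
    intro v hv
    exact L1 v hv
  have hdisj : K ⊓ R = ⊥ := by
    rw [eq_bot_iff]
    intro x hx
    obtain ⟨hk, hr⟩ := Submodule.mem_inf.mp hx
    obtain ⟨y, rfl⟩ := hr
    have hk' : z₀ (z₀ y) = 0 := LinearMap.mem_ker.mp hk
    have h4 : T (T (T (T y))) = 0 := hk'
    have h3 : T (T (T y)) = 0 := L1 _ h4
    have h2 : T (T y) = 0 := L1 _ h3
    exact (Submodule.mem_bot ℂ).mpr h2
  have hdisj' : Disjoint K R := disjoint_iff.mpr hdisj
  have hcodis : K ⊔ R = ⊤ := by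
    apply Submodule.eq_top_of_disjoint
    · rw [hK, hR, add_comm]
      exact (LinearMap.finrank_range_add_finrank_ker z₀).ge
    · exact hdisj'
  have hcompl : IsCompl K R := ⟨hdisj', codisjoint_iff.mpr hcodis⟩
  set π : Module.End ℂ M := K.subtype.comp (K.linearProjOfIsCompl R hcompl) with hπ
  have hπmem : ∀ x : M, π x ∈ K := fun x => (K.linearProjOfIsCompl R hcompl x).2
  have hπK : ∀ x ∈ K, π x = x := by
    intro x hx
    have h := Submodule.linearProjOfIsCompl_apply_left hcompl ⟨x, hx⟩
    simp only [hπ, LinearMap.comp_apply]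
    rw [show ((⟨x, hx⟩ : K) : M) = x from rfl] at h
    exact congrArg Subtype.val h
  have hπR : ∀ x ∈ R, π x = 0 := by
    intro x hx
    have h := Submodule.linearProjOfIsCompl_apply_right hcompl ⟨x, hx⟩
    simp only [hπ, LinearMap.comp_apply]
    rw [show ((⟨x, hx⟩ : R) : M) = x from rfl] at h
    exact congrArg Subtype.val h
  have hdecomp : ∀ x : M, ∃ k ∈ K, ∃ r ∈ R, x = k + r := by
    intro x
    have hx : x ∈ K ⊔ R := by rw [hcodis]; trivial
    obtain ⟨k, hk, r, hr, h⟩ := Submodule.mem_sup.mp hx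
    exact ⟨k, hk, r, hr, h.symm⟩
  have hπ_eq : ∀ x k r : M, k ∈ K → r ∈ R → x = k + r → π x = k := by
    intro x k r hk hr h
    rw [h, map_add, hπK k hk, hπR r hr, add_zero]
  have hπcomm : ∀ S : Module.End ℂ M, S * z₀ = z₀ * S → S * π = π * S := by
    intro S hS
    ext x
    obtain ⟨k, hk, r, hr, hx⟩ := hdecomp x
    have hSk : S k ∈ K := by
      have hk0 : z₀ k = 0 := hk
      have h1 := congrArg (fun f : Module.End ℂ M => f k) hS
      simp only [Module.End.mul_apply] at h1
      show z₀ (S k) = 0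
      rw [← h1, hk0, map_zero]
    have hSr : S r ∈ R := by
      obtain ⟨y, rfl⟩ := hr
      refine ⟨S y, ?_⟩
      have h1 := congrArg (fun f : Module.End ℂ M => f y) hS
      simp only [Module.End.mul_apply] at h1
      exact h1.symm
    simp only [Module.End.mul_apply]
    rw [hπ_eq x k r hk hr hx, hπ_eq (S x) (S k) (S r) hSk hSr (by rw [hx, map_add])]
  -- the unit z
  set zf : Module.End ℂ M := z₀ + π with hzf
  have hzinj : LinearMap.ker zf = ⊥ := by
    rw [eq_bot_iff]
    intro x hx
    have hx' : z₀ x + π x = 0 := LinearMap.mem_ker.mp hx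
    have h1 : z₀ x ∈ R := ⟨x, rfl⟩
    have h2 : π x ∈ K := hπmem x
    have h3 : z₀ x ∈ K := by
      have : z₀ x = -π x := eq_neg_of_add_eq_zero_left hx'
      rw [this]
      exact K.neg_mem h2
    have h4 : z₀ x = 0 := by
      have hm : z₀ x ∈ K ⊓ R := Submodule.mem_inf.mpr ⟨h3, h1⟩
      rw [hdisj] at hm
      simpa using hm
    have h5 : π x = 0 := by
      rw [h4, zero_add] at hx'
      exact hx'
    have h6 : x ∈ K := LinearMap.mem_ker.mpr h4
    have h7 : x = 0 := by rw [← hπK x h6, h5]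
    simpa using h7
  have hzbij : Function.Bijective zf :=
    ⟨LinearMap.ker_eq_bot.mp hzinj,
      LinearMap.injective_iff_surjective.mp (LinearMap.ker_eq_bot.mp hzinj)⟩
  have hzunit : IsUnit zf := (Module.End.isUnit_iff zf).mpr hzbij
  obtain ⟨zu, hzu⟩ := hzunit
  -- commutation facts for zf
  have hcommL : ∀ l ∈ L, ρ l * zf = zf * ρ l := by
    intro l hl
    rw [hzf, mul_add, add_mul, hz₀L l hl, hπcomm (ρ l) (hz₀L l hl)]
  have hcommU : eU * zf = zf * eU := by
    rw [hzf, mul_add, add_mul, hz₀U, hπcomm eU hz₀U]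
  have hcommV : eV * zf = zf * eV := by
    rw [hzf, mul_add, add_mul, hz₀V, hπcomm eV hz₀V]
  -- the key multiplicative identity for zf
  have hπPQ : π * (eU * eV) = 0 := by
    ext x
    obtain ⟨k, hk, r, hr, hx⟩ := hdecomp x
    have h1 : (eU * eV) k = 0 := by
      have hTk : T k = 0 := hKerT k hk
      have h2 : eU k + eV k - k = 0 := by
        have : T k = eU k + eV k - k := by
          rw [hT]; simp [LinearMap.sub_apply, LinearMap.add_apply]
        rw [← this, hTk]
      have h3 : eV k = k - eU k := by
        have h2' : eU k + eV k = k := sub_eq_zero.mp h2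
        exact eq_sub_of_add_eq' h2'
      have hUU : eU (eU k) = eU k := by
        have := congrArg (fun f : Module.End ℂ M => f k) hPP
        simpa [Module.End.mul_apply] using this
      calc (eU * eV) k = eU (eV k) := rfl
        _ = eU k - eU (eU k) := by rw [h3, map_sub]
        _ = 0 := by rw [hUU, sub_self]
    have hcommz : z₀ * (eU * eV) = (eU * eV) * z₀ := by
      calc z₀ * (eU * eV) = (z₀ * eU) * eV := (mul_assoc z₀ eU eV).symm
        _ = (eU * z₀) * eV := by rw [hz₀U]
        _ = eU * (z₀ * eV) := mul_assoc eU z₀ eV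
        _ = eU * (eV * z₀) := by rw [hz₀V]
        _ = (eU * eV) * z₀ := (mul_assoc eU eV z₀).symm
    have h4 : (eU * eV) r ∈ R := by
      obtain ⟨y, rfl⟩ := hr
      refine ⟨(eU * eV) y, ?_⟩
      have h1' := congrArg (fun f : Module.End ℂ M => f y) hcommz
      simp only [Module.End.mul_apply] at h1' ⊢
      exact h1'
    have h1' : eU (eV k) = 0 := h1
    have h4' : eU (eV r) ∈ R := h4
    simp only [Module.End.mul_apply, LinearMap.zero_apply]
    rw [hx, map_add, map_add, map_add, h1', map_zero, zero_add]
    exact hπR _ h4'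
  have hzfPQ : zf * (eU * eV) = (eU * eV) * (eU * eV) := by
    rw [hzf, add_mul, hzPQ, hπPQ, add_zero]
  -- finish
  refine ⟨zu, ?_, ?_, ?_, ?_⟩
  · intro l hl
    rw [commute_iff_eq, hzu]
    exact (hcommL l hl).symm
  · rw [commute_iff_eq, hzu]
    exact hcommU.symm
  · rw [commute_iff_eq, hzu]
    exact hcommV.symm
  · have hcU : Commute (↑zu : Module.End ℂ M) eU := by
      rw [commute_iff_eq, hzu]; exact hcommU.symm
    have hcV : Commute (↑zu : Module.End ℂ M) eV := by
      rw [commute_iff_eq, hzu]; exact hcommV.symm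
    have hwa : Commute (↑zu⁻¹ : Module.End ℂ M) (eU * eV) :=
      (hcU.units_inv_left).mul_right (hcV.units_inv_left)
    set w : Module.End ℂ M := ↑zu⁻¹ with hw
    set a : Module.End ℂ M := eU * eV with ha
    have hwz : w * zf = 1 := by rw [hw, ← hzu]; exact zu.inv_mul
    have key : a * a = zf * a := hzfPQ.symm
    have main : (w * a) * (w * a) = w * a := by
      calc (w * a) * (w * a) = w * ((a * w) * a) := by
            rw [mul_assoc, ← mul_assoc a w a]
        _ = w * ((w * a) * a) := by rw [← hwa.eq]
        _ = w * (w * (a * a)) := by rw [mul_assoc]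
        _ = w * (w * (zf * a)) := by rw [key]
        _ = w * ((w * zf) * a) := by rw [← mul_assoc w zf a]
        _ = w * (1 * a) := by rw [hwz]
        _ = w * a := by rw [one_mul]
    show (↑zu⁻¹ * eU * eV) * (↑zu⁻¹ * eU * eV) = ↑zu⁻¹ * eU * eV
    have e1 : (↑zu⁻¹ : Module.End ℂ M) * eU * eV = w * a := by
      rw [hw, ha, mul_assoc]
    rw [e1]
    exact main
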